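/- Let n ∈ ℤ, k ≥ 0, and let m be an integer with m ≤ 0. If ρ ∈ Ω₀ is a configuration whose k rightmost particles all lie in [1,∞), i.e. S(ρ, 0) ≥ k, then B_n R_k J_m ρ = B_n R_k ρ. (Lemma 3.2(iii)) -/

import Mathlib

open Set

/-- `Ω₀`: a configuration `ρ : ℤ → Bool` is admissible when its support
`{x : ℤ | ρ x = true}` is bounded above. -/
def BddSupport (ρ : ℤ → Bool) : Prop := BddAbove {x : ℤ | ρ x = true}

/-- The queue-length `S(ρ, x)`: the number of particles of `ρ` strictly to the right
of `x`. -/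
noncomputable def qS (ρ : ℤ → Bool) (x : ℤ) : ℕ :=
  {y : ℤ | x < y ∧ ρ y = true}.ncard

/-- The cut-off operator `R_k`: keeps only the `k` rightmost particles. -/
noncomputable def Rk (k : ℕ) (ρ : ℤ → Bool) : ℤ → Bool :=
  fun x => if qS ρ x < k then ρ x else false

/-- The push-back operator `B_n`: pushes all particles back into `(-∞, n]`,
preserving the exclusion. -/
noncomputable def Bn (n : ℤ) (ρ : ℤ → Bool) : ℤ → Bool :=
  fun x =>
    if n < x then false
    else if n - x < (qS ρ x : ℤ) then true
    else ρ x

/-- The jump operator `J_m`: exchanges the values of `ρ` at `m` and `m+1` if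
`ρ(m) = 1` and `ρ(m+1) = 0`, and leaves `ρ` unchanged otherwise. -/
def Jm (m : ℤ) (ρ : ℤ → Bool) : ℤ → Bool :=
  fun x =>
    if ρ m = true ∧ ρ (m + 1) = false then
      if x = m then ρ (m + 1) else if x = m + 1 then ρ m else ρ x
    else ρ x

lemma qS_finite (ρ : ℤ → Bool) (hρ : BddSupport ρ) (x : ℤ) :
    {y : ℤ | x < y ∧ ρ y = true}.Finite := by
  obtain ⟨B, hB⟩ := hρ
  apply (Set.finite_Ioc x B).subset
  rintro y ⟨h1, h2⟩
  exact ⟨h1, hB h2⟩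

lemma qS_mono (ρ : ℤ → Bool) (hρ : BddSupport ρ) {x y : ℤ} (h : x ≤ y) :
    qS ρ y ≤ qS ρ x :=
  Set.ncard_le_ncard (fun _ hz => ⟨lt_of_le_of_lt h hz.1, hz.2⟩) (qS_finite ρ hρ x)

lemma bddSupport_Jm (m : ℤ) (ρ : ℤ → Bool) (hρ : BddSupport ρ) :
    BddSupport (Jm m ρ) := by
  obtain ⟨B, hB⟩ := hρ
  refine ⟨max B (m + 1), ?_⟩
  intro y hy
  simp only [Jm, Set.mem_setOf_eq] at hy
  split_ifs at hy with h h1 h2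
  · exact absurd hy (by simp [h.2])
  · exact le_max_of_le_right (le_of_eq h2)
  · exact le_max_of_le_left (hB hy)
  · exact le_max_of_le_left (hB hy)

lemma Rk_Jm_eq (k : ℕ) (m : ℤ) (hm : m ≤ 0) (ρ : ℤ → Bool)
    (hρ : BddSupport ρ) (hk : k ≤ qS ρ 0) :
    Rk k (Jm m ρ) = Rk k ρ := by
  by_cases hsw : ρ m = true ∧ ρ (m + 1) = false
  · have hJ : ∀ y, y ≠ m → y ≠ m + 1 → Jm m ρ y = ρ y := by
      intro y h1 h2; simp [Jm, hsw, h1, h2]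
    have hsub : {y : ℤ | (0 : ℤ) < y ∧ ρ y = true} ⊆ {y : ℤ | m + 1 < y ∧ ρ y = true} := by
      rintro y ⟨h1, h2⟩
      refine ⟨?_, h2⟩
      rcases eq_or_ne y (m + 1) with rfl | hne
      · rw [hsw.2] at h2; exact absurd h2 (by simp)
      · omega
    have key : k ≤ qS ρ (m + 1) :=
      le_trans hk (Set.ncard_le_ncard hsub (qS_finite ρ hρ (m + 1)))
    funext x
    rcases lt_or_ge (m + 1) x with hx | hx
    · have hval : Jm m ρ x = ρ x := hJ x (by omega) (by omega)
      have hset : {y : ℤ | x < y ∧ Jm m ρ y = true} = {y : ℤ | x < y ∧ ρ y = true} := by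
        ext y
        constructor <;> rintro ⟨h1, h2⟩ <;> refine ⟨h1, ?_⟩
        · rwa [hJ y (by omega) (by omega)] at h2
        · rwa [hJ y (by omega) (by omega)]
      simp only [Rk, qS, hset, hval]; exact if_congr Iff.rfl rfl rfl
    · have h1 : ¬ qS (Jm m ρ) x < k := by
        have hsub2 : {y : ℤ | m + 1 < y ∧ ρ y = true} ⊆ {y : ℤ | x < y ∧ Jm m ρ y = true} := by
          rintro y ⟨hy1, hy2⟩
          exact ⟨by omega, by rw [hJ y (by omega) (by omega)]; exact hy2⟩
        have := Set.ncard_le_ncard hsub2 (qS_finite _ (bddSupport_Jm m ρ hρ) x)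
        simp only [qS] at *
        omega
      rcases eq_or_lt_of_le hx with rfl | hx'
      · simp [Rk, h1, hsw.2]
      · have h2 : ¬ qS ρ x < k := by
          have := qS_mono ρ hρ (show x ≤ m + 1 by omega)
          omega
        simp [Rk, h1, h2]
  · have : Jm m ρ = ρ := funext fun x => by simp [Jm, hsw]
    rw [this]

/-- Lemma 3.2(iii): if `m ≤ 0` and the `k` rightmost particles of `ρ` all lie in
`[1, ∞)` (i.e. `S(ρ, 0) ≥ k`), then `B_n R_k J_m ρ = B_n R_k ρ`. -/
theorem Bn_Rk_Jm_left (n : ℤ) (k : ℕ) (m : ℤ) (hm : m ≤ 0)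
    (ρ : ℤ → Bool) (hρ : BddSupport ρ) (hk : k ≤ qS ρ 0) :
    Bn n (Rk k (Jm m ρ)) = Bn n (Rk k ρ) := by
  rw [Rk_Jm_eq k m hm ρ hρ hk]
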